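/- Let X, Y be real Hilbert spaces, F : X → Y a Fréchet differentiable map, and u* ∈ X with F(u*) = φ. Suppose there are constants M > 0 and μ > 0 such that for all u in a ball B containing the iterates, ‖F'(u)‖ ≤ M and 2⟨F(u) − F(u*), F'(u)(u − u*)⟩ ≥ (M² + μ)‖F(u) − F(u*)‖². Then the Landweber iterates u_{k+1} = u_k − F'(u_k)*(F(u_k) − φ) satisfy the Fejér monotonicity estimate ‖u_{k+1} − u*‖² − ‖u_k − u*‖² ≤ −μ‖F(u_k) − φ‖² for all k with u_k ∈ B. -/
import Mathlib


open RealInnerProductSpace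

/-- Fejér monotonicity of the Landweber iteration under the weak tangential
cone condition. -/
theorem landweber_fejer_monotone
    {X Y : Type*} [NormedAddCommGroup X] [InnerProductSpace ℝ X] [CompleteSpace X]
    [NormedAddCommGroup Y] [InnerProductSpace ℝ Y] [CompleteSpace Y]
    (F : X → Y) (F' : X → X →L[ℝ] Y) (hF : ∀ u, HasFDerivAt F (F' u) u)
    (B : Set X) (ustar : X) (φ : Y) (hsol : F ustar = φ) (hustar : ustar ∈ B)
    (M μ : ℝ) (hM : 0 < M) (hμ : 0 < μ)
    (hbound : ∀ u ∈ B, ‖F' u‖ ≤ M)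
    (htcc : ∀ u ∈ B, ∀ v ∈ B,
      2 * ⟪F u - F v, F' u (u - v)⟫ ≥ (M ^ 2 + μ) * ‖F u - F v‖ ^ 2)
    (u : ℕ → X)
    (hiter : ∀ k, u (k + 1) = u k - ContinuousLinearMap.adjoint (F' (u k)) (F (u k) - φ)) :
    ∀ k, u k ∈ B →
      ‖u (k + 1) - ustar‖ ^ 2 - ‖u k - ustar‖ ^ 2 ≤ -μ * ‖F (u k) - φ‖ ^ 2 := by
  intro k hk
  set A := F' (u k) with hA_def
  set e := u k - ustar with he_def
  set r := F (u k) - φ with hr_def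
  have hstep : u (k + 1) - ustar = e - ContinuousLinearMap.adjoint A r := by
    rw [hiter k, he_def]; abel
  have hexp : ‖u (k + 1) - ustar‖ ^ 2 =
      ‖e‖ ^ 2 - 2 * ⟪e, ContinuousLinearMap.adjoint A r⟫ +
        ‖ContinuousLinearMap.adjoint A r‖ ^ 2 := by
    rw [hstep, @norm_sub_sq_real]
  have hip : ⟪e, ContinuousLinearMap.adjoint A r⟫ = ⟪r, A e⟫ := by
    rw [real_inner_comm, ContinuousLinearMap.adjoint_inner_left]
  have htcc' : 2 * ⟪r, A e⟫ ≥ (M ^ 2 + μ) * ‖r‖ ^ 2 := by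
    have := htcc (u k) hk ustar hustar
    simpa [hsol, r, e, A] using this
  have hA : ‖ContinuousLinearMap.adjoint A r‖ ^ 2 ≤ M ^ 2 * ‖r‖ ^ 2 := by
    have h1 : ‖ContinuousLinearMap.adjoint A r‖ ≤ M * ‖r‖ := by
      calc ‖ContinuousLinearMap.adjoint A r‖ ≤ ‖ContinuousLinearMap.adjoint A‖ * ‖r‖ :=
            (ContinuousLinearMap.adjoint A).le_opNorm r
        _ ≤ M * ‖r‖ := by
            have hn : ‖ContinuousLinearMap.adjoint A‖ = ‖A‖ :=
              LinearIsometryEquiv.norm_map ContinuousLinearMap.adjoint A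
            rw [hn, hA_def]
            exact mul_le_mul_of_nonneg_right (hbound (u k) hk) (norm_nonneg r)
    calc ‖ContinuousLinearMap.adjoint A r‖ ^ 2 ≤ (M * ‖r‖) ^ 2 :=
          pow_le_pow_left₀ (norm_nonneg _) h1 2
      _ = M ^ 2 * ‖r‖ ^ 2 := by ring
  have : ‖u (k + 1) - ustar‖ ^ 2 - ‖e‖ ^ 2 ≤ -(M ^ 2 + μ) * ‖r‖ ^ 2 + M ^ 2 * ‖r‖ ^ 2 := by
    rw [hexp, hip]
    nlinarith [htcc', hA]
  calc ‖u (k + 1) - ustar‖ ^ 2 - ‖u k - ustar‖ ^ 2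
      ≤ -(M ^ 2 + μ) * ‖r‖ ^ 2 + M ^ 2 * ‖r‖ ^ 2 := this
    _ = -μ * ‖F (u k) - φ‖ ^ 2 := by ring
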